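/- Let Φ be an irreducible reduced root system of rank ℓ. Suppose (λ,μ,ν) is a triple of dominant weights such that whenever λ',μ' are dominant with λ' ≤ λ, μ' ≤ μ, ν ≤ λ'+μ', one has λ'=λ and μ'=μ, and moreover ν + Σ_{i=1}^ℓ αᵢ ≤ λ+μ. Then for β = λ+μ−ν, the quantity ht₀⁺(β) is at most 2, where ht₀⁺(β) is defined as follows: write β = Σ aᵢωᵢ in fundamental weights; if Φ is not of type F₄, ht₀⁺(β) = Σ_{i∈I₀, aᵢ>0} aᵢ with I₀ the maximal simply-laced subsystem of the Dynkin diagram containing node 1; if Φ is of type F₄, ht₀⁺(β) is the maximum of Σ_{i∈{1,2}, aᵢ>0} aᵢ and Σ_{i∈{3,4}, aᵢ>0} aᵢ. -/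

import Mathlib

open scoped RealInnerProductSpace

noncomputable section

variable {E : Type*} [NormedAddCommGroup E] [InnerProductSpace ℝ E]

/-- The pairing `⟨x, α∨⟩ = 2(x,α)/(α,α)`. -/
def cpair (x α : E) : ℝ := 2 * ⟪x, α⟫ / ⟪α, α⟫

/-- Reflection in the hyperplane orthogonal to `α`. -/
def wrefl (α x : E) : E := x - cpair x α • α

/-- An irreducible reduced root system with a chosen base `simple : Fin ℓ → E`. -/
structure RootSystemData (ℓ : ℕ) (E : Type*) [NormedAddCommGroup E]
    [InnerProductSpace ℝ E] where
  roots : Finset E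
  simple : Fin ℓ → E
  simple_mem : ∀ i, simple i ∈ roots
  root_ne_zero : ∀ α ∈ roots, α ≠ 0
  reduced : ∀ α ∈ roots, (2 : ℝ) • α ∉ roots
  cpair_int : ∀ α ∈ roots, ∀ β ∈ roots, ∃ n : ℤ, cpair β α = (n : ℝ)
  reflect_mem : ∀ α ∈ roots, ∀ β ∈ roots, wrefl α β ∈ roots
  simple_indep : LinearIndependent ℝ simple
  root_decomp : ∀ α ∈ roots,
    (∃ c : Fin ℓ → ℕ, α = ∑ i, (c i : ℝ) • simple i) ∨
    (∃ c : Fin ℓ → ℕ, α = -∑ i, (c i : ℝ) • simple i)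
  irred : ∀ S : Finset (Fin ℓ), S.Nonempty →
    (∀ i ∈ S, ∀ j ∉ S, ⟪simple i, simple j⟫ = 0) → S = Finset.univ

namespace RootSystemData

variable {ℓ : ℕ} (R : RootSystemData ℓ E)

/-- Integral weights. -/
def IsIntegral (x : E) : Prop := ∀ α ∈ R.roots, ∃ n : ℤ, cpair x α = (n : ℝ)

/-- Dominant (integral) weights. -/
def IsDominant (x : E) : Prop :=
  R.IsIntegral x ∧ ∀ i, 0 ≤ cpair x (R.simple i)

/-- The dominant order: `R.wle μ λ` means `μ ≤ λ`, i.e. `λ - μ` is a nonnegative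
integer combination of the simple roots. -/
def wle (μ lam : E) : Prop :=
  ∃ c : Fin ℓ → ℕ, lam - μ = ∑ i, (c i : ℝ) • R.simple i

/-- Minuscule weights: nonzero dominant weights all of whose pairings with roots
lie in `{0, 1, -1}`. -/
def IsMinuscule (x : E) : Prop :=
  R.IsDominant x ∧ x ≠ 0 ∧
  ∀ α ∈ R.roots, cpair x α = 0 ∨ cpair x α = 1 ∨ cpair x α = -1

/-- `y` lies in the Weyl group orbit of `x`. -/
def InWeylOrbit (x y : E) : Prop :=
  ∃ l : List E, (∀ α ∈ l, α ∈ R.roots) ∧ y = l.foldr wrefl x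

/-- `R.IsDualOf μ λ` expresses `μ = -w₀ λ`: `μ` is the dominant element of the
Weyl orbit of `-λ`. -/
def IsDualOf (μ lam : E) : Prop := R.IsDominant μ ∧ R.InWeylOrbit (-lam) μ

/-- Low triples of dominant weights. -/
def LowTriple (lam mu nu : E) : Prop :=
  R.IsDominant lam ∧ R.IsDominant mu ∧ R.IsDominant nu ∧
  (∀ lam' mu' : E, R.IsDominant lam' → R.IsDominant mu' →
    R.wle lam' lam → R.wle mu' mu → R.wle nu (lam' + mu') → lam' = lam ∧ mu' = mu) ∧
  R.wle (nu + ∑ i, R.simple i) (lam + mu)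

/-- Covering relation in the poset of dominant weights. -/
def Covers (lam mu : E) : Prop :=
  R.IsDominant lam ∧ R.IsDominant mu ∧ R.wle mu lam ∧ mu ≠ lam ∧
  ∀ η, R.IsDominant η → R.wle mu η → R.wle η lam → η = mu ∨ η = lam

/-- A root of the subsystem `Φ_I` generated by the simple roots indexed by `I`. -/
def IsRootOf (I : Finset (Fin ℓ)) (β : E) : Prop :=
  β ∈ R.roots ∧ ∃ c : Fin ℓ → ℤ, (∀ i, c i ≠ 0 → i ∈ I) ∧
    β = ∑ i, (c i : ℝ) • R.simple i

/-- A short root of `Φ_I`. -/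
def IsShortRootOf (I : Finset (Fin ℓ)) (β : E) : Prop :=
  R.IsRootOf I β ∧ ∀ γ, R.IsRootOf I γ → ⟪β, β⟫ ≤ ⟪γ, γ⟫

/-- `θ` is the highest short root of `Φ_I`. -/
def IsHighestShortRoot (I : Finset (Fin ℓ)) (θ : E) : Prop :=
  R.IsShortRootOf I θ ∧ ∀ γ, R.IsShortRootOf I γ → R.wle γ θ

/-- `I` indexes a connected (i.e. irreducible) subdiagram of the Dynkin diagram. -/
def Connected (I : Finset (Fin ℓ)) : Prop :=
  I.Nonempty ∧ ∀ S ⊆ I, S.Nonempty →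
    (∀ i ∈ S, ∀ j ∈ I, j ∉ S → ⟪R.simple i, R.simple j⟫ = 0) → S = I

/-- `I` is of type A: the Cartan matrix of `Φ_I` is that of a type `A` chain. -/
def IsTypeASub (I : Finset (Fin ℓ)) : Prop :=
  ∃ e : Fin I.card ≃ {i // i ∈ I}, ∀ a b : Fin I.card,
    cpair (R.simple (e b).1) (R.simple (e a).1) =
      if a = b then 2
      else if (a : ℕ) + 1 = (b : ℕ) ∨ (b : ℕ) + 1 = (a : ℕ) then -1 else 0

/-- The subdiagram indexed by `I` is simply laced. -/
def SimplyLaced (I : Finset (Fin ℓ)) : Prop :=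
  ∀ i ∈ I, ∀ j ∈ I, i ≠ j →
    cpair (R.simple i) (R.simple j) = 0 ∨ cpair (R.simple i) (R.simple j) = -1

end RootSystemData

variable {ℓ : ℕ}

/-- The Cartan matrix of type F₄ (Bourbaki numbering). -/
def F4Cartan : Fin 4 → Fin 4 → ℝ :=
  ![![2, -1, 0, 0], ![-1, 2, -1, 0], ![0, -2, 2, -1], ![0, 0, -1, 2]]

/-- `R` is of type F₄. -/
def RootSystemData.IsF4 (R : RootSystemData ℓ E) : Prop :=
  ∃ e : Fin 4 ≃o Fin ℓ, ∀ a b : Fin 4,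
    cpair (R.simple (e b)) (R.simple (e a)) = F4Cartan a b

lemma cpair_sub_left (x y α : E) : cpair (x - y) α = cpair x α - cpair y α := by
  unfold cpair; rw [inner_sub_left]; ring

lemma cpair_zero_left (α : E) : cpair (0 : E) α = 0 := by
  simp [cpair]

lemma cpair_smul_left (a : ℝ) (x α : E) : cpair (a • x) α = a * cpair x α := by
  unfold cpair; rw [real_inner_smul_left]; ring

lemma cpair_sum_left {ι : Type*} (s : Finset ι) (v : ι → E) (α : E) :
    cpair (∑ k ∈ s, v k) α = ∑ k ∈ s, cpair (v k) α := by
  unfold cpair; rw [sum_inner, Finset.mul_sum, Finset.sum_div]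

lemma cpair_self {α : E} (h : α ≠ 0) : cpair α α = 2 := by
  have h' : ⟪α, α⟫ ≠ 0 := (inner_self_ne_zero (𝕜 := ℝ)).mpr h
  rw [cpair, mul_div_assoc, div_self h', mul_one]

lemma cpair_eq_zero_of_inner {x α : E} (h : ⟪x, α⟫ = 0) : cpair x α = 0 := by
  simp [cpair, h]

lemma cpair_add_left (x y α : E) : cpair (x + y) α = cpair x α + cpair y α := by
  unfold cpair; rw [inner_add_left]; ring

lemma inner_eq_zero_of_cpair {x α : E} (hα : α ≠ 0) (h : cpair x α = 0) : ⟪x, α⟫ = 0 := by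
  have h' : ⟪α, α⟫ ≠ 0 := (inner_self_ne_zero (𝕜 := ℝ)).mpr hα
  unfold cpair at h
  rcases div_eq_zero_iff.mp h with h2 | h2
  · rcases mul_eq_zero.mp h2 with h3 | h3
    · norm_num at h3
    · exact h3
  · exact absurd h2 h'


lemma sum_ite_single {ℓ : ℕ} (b : Fin ℓ) (r : ℝ) (v : Fin ℓ → E) :
    ∑ m, (if m = b then r else 0) • v m = r • v b := by
  have h : ∀ m, (if m = b then r else 0) • v m = if m = b then r • v m else 0 :=
    fun m => by split <;> simp
  rw [Finset.sum_congr rfl (fun m _ => h m), Finset.sum_ite_eq' Finset.univ b]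
  simp

variable {ℓ : ℕ}

namespace RootSystemData

lemma simple_ne_zero (R : RootSystemData ℓ E) (i : Fin ℓ) : R.simple i ≠ 0 :=
  R.root_ne_zero _ (R.simple_mem i)

lemma cpair_simple_nonpos (R : RootSystemData ℓ E) {i j : Fin ℓ} (h : i ≠ j) :
    cpair (R.simple i) (R.simple j) ≤ 0 := by
  by_contra hpos
  push_neg at hpos
  set c : ℝ := cpair (R.simple i) (R.simple j) with hc
  have hmem : wrefl (R.simple j) (R.simple i) ∈ R.roots :=
    R.reflect_mem _ (R.simple_mem j) _ (R.simple_mem i)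
  have hw : wrefl (R.simple j) (R.simple i) = R.simple i - c • R.simple j := rfl
  have hli := Fintype.linearIndependent_iff.mp R.simple_indep
  rcases R.root_decomp _ hmem with ⟨c', hc'⟩ | ⟨c', hc'⟩
  · set g : Fin ℓ → ℝ := fun m =>
      (if m = i then 1 else 0) - (if m = j then c else 0) - c' m with hg
    have hsum : ∑ m, g m • R.simple m = 0 := by
      have e1 : ∑ m, g m • R.simple m =
          (∑ m, (if m = i then (1:ℝ) else 0) • R.simple m)
          - (∑ m, (if m = j then c else 0) • R.simple m)
          - ∑ m, (c' m : ℝ) • R.simple m := by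
        rw [← Finset.sum_sub_distrib, ← Finset.sum_sub_distrib]
        refine Finset.sum_congr rfl fun m _ => ?_
        simp [hg, sub_smul]
      rw [e1]
      have e2 : ∑ m, (if m = i then (1:ℝ) else 0) • R.simple m = R.simple i := by
        rw [sum_ite_single]; simp
      have e3 : ∑ m, (if m = j then c else 0) • R.simple m = c • R.simple j :=
        sum_ite_single j c R.simple
      rw [e2, e3, ← hc', hw] at *
      abel
    have := hli g hsum j
    have hcj : (0:ℝ) ≤ c' j := by positivity
    simp [hg, h.symm] at this
    -- this : -c - c' j = 0  (roughly)
    nlinarith [this]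
  · set g : Fin ℓ → ℝ := fun m =>
      (if m = i then 1 else 0) - (if m = j then c else 0) + c' m with hg
    have hsum : ∑ m, g m • R.simple m = 0 := by
      have e1 : ∑ m, g m • R.simple m =
          (∑ m, (if m = i then (1:ℝ) else 0) • R.simple m)
          - (∑ m, (if m = j then c else 0) • R.simple m)
          + ∑ m, (c' m : ℝ) • R.simple m := by
        rw [← Finset.sum_sub_distrib, ← Finset.sum_add_distrib]
        refine Finset.sum_congr rfl fun m _ => ?_
        simp [hg, sub_smul, add_smul]
      rw [e1]
      have e2 : ∑ m, (if m = i then (1:ℝ) else 0) • R.simple m = R.simple i := by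
        rw [sum_ite_single]; simp
      have e3 : ∑ m, (if m = j then c else 0) • R.simple m = c • R.simple j :=
        sum_ite_single j c R.simple
      have e4 : R.simple i - c • R.simple j = -∑ m, (c' m : ℝ) • R.simple m := by
        rw [← hw, hc']
      rw [e2, e3]
      rw [sub_eq_iff_eq_add'] at e4
      rw [e4]
      abel
    have := hli g hsum i
    have hci : (0:ℝ) ≤ c' i := by positivity
    simp [hg, h] at this
    nlinarith [this]

end RootSystemData

namespace RootSystemData

variable {ℓ : ℕ}

lemma reduce_min (R : RootSystemData ℓ E) (x y nu : E)
    (hx : R.IsDominant x)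
    (hmin : ∀ x', R.IsDominant x' → R.wle x' x → R.wle nu (x' + y) → x' = x)
    (hgap : R.wle (nu + ∑ i, R.simple i) (x + y))
    (c : Fin ℓ → ℕ) (hc1 : ∀ i, c i ≤ 1)
    (hdom : ∀ m, cpair (∑ i, (c i : ℝ) • R.simple i) (R.simple m) ≤ cpair x (R.simple m)) :
    ∑ i, (c i : ℝ) • R.simple i = 0 := by
  set θ : E := ∑ i, (c i : ℝ) • R.simple i with hθ
  have hθint : ∀ α ∈ R.roots, ∃ z : ℤ, cpair θ α = (z : ℝ) := by
    intro α hα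
    have h : ∀ i : Fin ℓ, ∃ z : ℤ, cpair (R.simple i) α = (z : ℝ) :=
      fun i => R.cpair_int α hα _ (R.simple_mem i)
    choose z hz using h
    refine ⟨∑ i, (c i : ℤ) * z i, ?_⟩
    rw [hθ, cpair_sum_left]
    push_cast
    exact Finset.sum_congr rfl fun i _ => by rw [cpair_smul_left, hz i]
  have hx' : R.IsDominant (x - θ) := by
    constructor
    · intro α hα
      obtain ⟨zx, hzx⟩ := hx.1 α hα
      obtain ⟨zθ, hzθ⟩ := hθint α hα
      exact ⟨zx - zθ, by rw [cpair_sub_left, hzx, hzθ]; push_cast; ring⟩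
    · intro m
      rw [cpair_sub_left]
      linarith [hdom m]
  have hwle : R.wle (x - θ) x := ⟨c, by rw [sub_sub_cancel]⟩
  have hnu : R.wle nu ((x - θ) + y) := by
    obtain ⟨d, hd⟩ := hgap
    refine ⟨fun i => d i + (1 - c i), ?_⟩
    have key : (x - θ) + y - nu = (x + y - (nu + ∑ i, R.simple i)) + ((∑ i, R.simple i) - θ) := by
      abel
    rw [key, hd, hθ]
    rw [← Finset.sum_sub_distrib, ← Finset.sum_add_distrib]
    refine Finset.sum_congr rfl fun i _ => ?_
    have hci := hc1 i
    have : ((d i + (1 - c i) : ℕ) : ℝ) = (d i : ℝ) + 1 - (c i : ℝ) := by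
      push_cast [Nat.cast_sub hci]
      ring
    rw [this]
    module
  have hfix := hmin (x - θ) hx' hwle hnu
  exact sub_eq_self.mp hfix

lemma cpair_le_one (R : RootSystemData ℓ E) (x y nu : E)
    (hx : R.IsDominant x)
    (hmin : ∀ x', R.IsDominant x' → R.wle x' x → R.wle nu (x' + y) → x' = x)
    (hgap : R.wle (nu + ∑ i, R.simple i) (x + y))
    (i : Fin ℓ) : cpair x (R.simple i) ≤ 1 := by
  by_contra hgt
  push_neg at hgt
  obtain ⟨z, hz⟩ := hx.1 _ (R.simple_mem i)
  have h2 : 2 ≤ cpair x (R.simple i) := by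
    rw [hz] at hgt ⊢
    exact_mod_cast (by exact_mod_cast hgt : (1:ℤ) < z)
  set c : Fin ℓ → ℕ := fun m => if m = i then 1 else 0 with hc
  have hθ : ∑ m, (c m : ℝ) • R.simple m = R.simple i := by
    have : ∀ m, ((c m : ℝ)) • R.simple m = (if m = i then (1:ℝ) else 0) • R.simple m := by
      intro m; by_cases hm : m = i <;> simp [hc, hm]
    rw [Finset.sum_congr rfl fun m _ => this m, sum_ite_single]
    simp
  have hdom : ∀ m, cpair (∑ k, (c k : ℝ) • R.simple k) (R.simple m) ≤ cpair x (R.simple m) := by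
    intro m
    rw [hθ]
    by_cases hm : m = i
    · subst hm
      rw [cpair_self (R.simple_ne_zero m)]
      exact h2
    · exact le_trans (R.cpair_simple_nonpos (fun h => hm h.symm)) (hx.2 m)
  have h0 := R.reduce_min x y nu hx hmin hgap c (fun m => by simp [hc]; split <;> omega) hdom
  rw [hθ] at h0
  exact R.simple_ne_zero i h0

lemma path_min (R : RootSystemData ℓ E) (x y nu : E)
    (hx : R.IsDominant x)
    (hmin : ∀ x', R.IsDominant x' → R.wle x' x → R.wle nu (x' + y) → x' = x)
    (hgap : R.wle (nu + ∑ i, R.simple i) (x + y))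
    (n : ℕ) (hn : 1 ≤ n) (f : ℕ → Fin ℓ)
    (hinj : ∀ s t, s ≤ n → t ≤ n → f s = f t → s = t)
    (hcons : ∀ k, k < n → cpair (R.simple (f k)) (R.simple (f (k+1))) = -1 ∧
      cpair (R.simple (f (k+1))) (R.simple (f k)) = -1)
    (hchord : ∀ s t, t ≤ n → s + 1 < t → ⟪R.simple (f s), R.simple (f t)⟫ = 0)
    (hp0 : 1 ≤ cpair x (R.simple (f 0))) (hp1 : 1 ≤ cpair x (R.simple (f n))) : False := by
  classical
  set J : Finset (Fin ℓ) := (Finset.range (n+1)).image f with hJ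
  set c : Fin ℓ → ℕ := fun m => if m ∈ J then 1 else 0 with hc
  have hθ : ∑ m, (c m : ℝ) • R.simple m = ∑ k ∈ Finset.range (n+1), R.simple (f k) := by
    have e1 : ∀ m, ((c m : ℝ)) • R.simple m = (if m ∈ J then R.simple m else 0) := by
      intro m; by_cases hm : m ∈ J <;> simp [hc, hm]
    rw [Finset.sum_congr rfl fun m _ => e1 m, Finset.sum_ite_mem, Finset.univ_inter]
    rw [hJ, Finset.sum_image]
    intro s hs t ht hst
    exact hinj s t (by simpa [Nat.lt_succ_iff] using hs) (by simpa [Nat.lt_succ_iff] using ht) hst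
  -- the key pairing values
  have hval : ∀ t, t ≤ n → cpair (∑ k ∈ Finset.range (n+1), R.simple (f k)) (R.simple (f t)) =
      (if t = 0 then 1 else 0) + (if t = n then 1 else 0) := by
    intro t ht
    rw [cpair_sum_left]
    have hterm : ∀ k ∈ Finset.range (n+1), cpair (R.simple (f k)) (R.simple (f t)) =
        (if k = t then (2:ℝ) else 0) + (if k = t+1 then -1 else 0) + (if k + 1 = t then -1 else 0) := by
      intro k hk
      rw [Finset.mem_range, Nat.lt_succ_iff] at hk
      by_cases h1 : k = t
      · subst h1
        rw [if_pos rfl, if_neg (by omega), if_neg (by omega)]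
        rw [cpair_self (R.simple_ne_zero (f k))]
        norm_num
      by_cases h2 : k = t + 1
      · subst h2
        rw [if_neg h1, if_pos rfl, if_neg (by omega)]
        rw [(hcons t (by omega)).2]
        norm_num
      by_cases h3 : k + 1 = t
      · rw [if_neg h1, if_neg h2, if_pos h3]
        have := (hcons k (by omega)).1
        rw [h3] at this
        rw [this]
        norm_num
      rw [if_neg h1, if_neg h2, if_neg h3]
      norm_num
      rcases (by omega : k + 1 < t ∨ t + 1 < k) with h4 | h4
      · exact cpair_eq_zero_of_inner (hchord k t ht h4)
      · exact cpair_eq_zero_of_inner (by rw [real_inner_comm]; exact hchord t k hk h4)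
    rw [Finset.sum_congr rfl hterm, Finset.sum_add_distrib, Finset.sum_add_distrib]
    have s1 : ∑ k ∈ Finset.range (n+1), (if k = t then (2:ℝ) else 0) = 2 := by
      rw [Finset.sum_ite_eq' (Finset.range (n+1)) t]
      rw [if_pos (Finset.mem_range.mpr (by omega))]
    have s2 : ∑ k ∈ Finset.range (n+1), (if k = t+1 then (-1:ℝ) else 0) =
        if t < n then -1 else 0 := by
      rw [Finset.sum_ite_eq' (Finset.range (n+1)) (t+1)]
      by_cases h : t < n
      · rw [if_pos (Finset.mem_range.mpr (by omega)), if_pos h]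
      · rw [if_neg (by simp [Finset.mem_range]; omega), if_neg h]
    have s3 : ∑ k ∈ Finset.range (n+1), (if k + 1 = t then (-1:ℝ) else 0) =
        if 0 < t then -1 else 0 := by
      by_cases h : 0 < t
      · have e : ∀ k ∈ Finset.range (n+1), (if k + 1 = t then (-1:ℝ) else 0) =
            (if k = t - 1 then (-1:ℝ) else 0) := by
          intro k _
          exact if_congr (by omega) rfl rfl
        rw [Finset.sum_congr rfl e, Finset.sum_ite_eq' (Finset.range (n+1)) (t-1)]
        rw [if_pos (Finset.mem_range.mpr (by omega)), if_pos h]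
      · rw [if_neg h]
        exact Finset.sum_eq_zero fun k _ => if_neg (by omega)
    rw [s1, s2, s3]
    split_ifs <;> norm_num <;> omega
  -- dominance comparison
  have hdom : ∀ m, cpair (∑ k, (c k : ℝ) • R.simple k) (R.simple m) ≤ cpair x (R.simple m) := by
    intro m
    rw [hθ]
    by_cases hm : ∃ t, t ≤ n ∧ f t = m
    · obtain ⟨t, ht, rfl⟩ := hm
      rw [hval t ht]
      by_cases h0 : t = 0
      · subst h0
        rw [if_pos rfl, if_neg (by omega)]
        simpa using hp0
      by_cases h1 : t = n
      · subst h1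
        rw [if_neg h0, if_pos rfl]
        simpa using hp1
      · rw [if_neg h0, if_neg h1]
        simpa using hx.2 (f t)
    · push_neg at hm
      rw [cpair_sum_left]
      refine le_trans (Finset.sum_nonpos fun k hk => ?_) (hx.2 m)
      rw [Finset.mem_range, Nat.lt_succ_iff] at hk
      exact R.cpair_simple_nonpos (hm k hk)
  have hzero := R.reduce_min x y nu hx hmin hgap c
    (fun m => by simp [hc]; split <;> omega) hdom
  rw [hθ] at hzero
  have := hval 0 (by omega)
  rw [hzero, cpair_zero_left, if_pos rfl, if_neg (by omega)] at this
  norm_num at this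


lemma walk_exists (R : RootSystemData ℓ E) (I0 : Finset (Fin ℓ)) (i j : Fin ℓ)
    (hi : i ∈ I0)
    (h : Relation.ReflTransGen
      (fun a b => b ∈ I0 ∧ a ≠ b ∧ ⟪R.simple a, R.simple b⟫ ≠ 0) i j) :
    ∃ n : ℕ, ∃ f : ℕ → Fin ℓ, f 0 = i ∧ f n = j ∧ (∀ k, k ≤ n → f k ∈ I0) ∧
      ∀ k, k < n → (f (k+1)) ∈ I0 ∧ f k ≠ f (k+1) ∧
        ⟪R.simple (f k), R.simple (f (k+1))⟫ ≠ 0 := by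
  induction h with
  | refl => exact ⟨0, fun _ => i, rfl, rfl, fun k _ => hi, fun k hk => absurd hk (by omega)⟩
  | tail hab hbc ih =>
    obtain ⟨n, f, hf0, hfn, hmem, hchain⟩ := ih
    rename_i b c
    refine ⟨n + 1, fun k => if k ≤ n then f k else c, by simp [hf0], by simp, ?_, ?_⟩
    · intro k hk
      by_cases h : k ≤ n
      · simpa [h] using hmem k h
      · simpa [h] using hbc.1
    · intro k hk
      by_cases h : k < n
      · simpa [Nat.le_of_lt h, Nat.succ_le_of_lt h] using hchain k h
      · have hkn : k = n := by omega
        subst hkn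
        simp only [le_refl, if_pos, if_neg (by omega : ¬ k + 1 ≤ k)]
        rw [hfn]
        exact hbc

lemma exists_path (R : RootSystemData ℓ E) (I0 : Finset (Fin ℓ))
    (hConn : R.Connected I0) (i j : Fin ℓ) (hi : i ∈ I0) (hj : j ∈ I0) (hij : i ≠ j) :
    ∃ n : ℕ, ∃ f : ℕ → Fin ℓ, 1 ≤ n ∧ f 0 = i ∧ f n = j ∧ (∀ k, k ≤ n → f k ∈ I0) ∧
      (∀ s t, s ≤ n → t ≤ n → f s = f t → s = t) ∧
      (∀ k, k < n → ⟪R.simple (f k), R.simple (f (k+1))⟫ ≠ 0) ∧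
      (∀ s t, t ≤ n → s + 1 < t → ⟪R.simple (f s), R.simple (f t)⟫ = 0) := by
  classical
  -- Step 1: reachability
  have hreach : Relation.ReflTransGen
      (fun a b => b ∈ I0 ∧ a ≠ b ∧ ⟪R.simple a, R.simple b⟫ ≠ 0) i j := by
    set A : Fin ℓ → Fin ℓ → Prop :=
      fun a b => b ∈ I0 ∧ a ≠ b ∧ ⟪R.simple a, R.simple b⟫ ≠ 0 with hA
    set S : Finset (Fin ℓ) := I0.filter (fun k => Relation.ReflTransGen A i k) with hS
    have hsub : S ⊆ I0 := Finset.filter_subset _ _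
    have hne : S.Nonempty := ⟨i, Finset.mem_filter.mpr ⟨hi, Relation.ReflTransGen.refl⟩⟩
    have hbound : ∀ a ∈ S, ∀ b ∈ I0, b ∉ S → ⟪R.simple a, R.simple b⟫ = 0 := by
      intro a ha b hb hbS
      by_contra hne0
      have hab : a ≠ b := by
        rintro rfl
        exact hbS ha
      have hra : Relation.ReflTransGen A i a := (Finset.mem_filter.mp ha).2
      exact hbS (Finset.mem_filter.mpr ⟨hb, hra.tail ⟨hb, hab, hne0⟩⟩)
    have heq := hConn.2 S hsub hne hbound
    have : j ∈ S := heq ▸ hj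
    exact (Finset.mem_filter.mp this).2
  -- Step 2: minimal walk
  set P : ℕ → Prop := fun n => ∃ f : ℕ → Fin ℓ, f 0 = i ∧ f n = j ∧ (∀ k, k ≤ n → f k ∈ I0) ∧
      ∀ k, k < n → (f (k+1)) ∈ I0 ∧ f k ≠ f (k+1) ∧
        ⟪R.simple (f k), R.simple (f (k+1))⟫ ≠ 0 with hP
  have hex : ∃ n, P n := R.walk_exists I0 i j hi hreach
  set n := Nat.find hex with hn
  obtain ⟨f, hf0, hfn, hmem, hchain⟩ : P n := Nat.find_spec hex
  have hminim : ∀ m, m < n → ¬ P m := fun m hm => Nat.find_min hex hm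
  have hn1 : 1 ≤ n := by
    rcases Nat.eq_zero_or_pos n with h | h
    · exfalso; apply hij; rw [← hf0, ← hfn, h]
    · exact h
  -- injectivity
  have hinj : ∀ s t, s ≤ n → t ≤ n → f s = f t → s = t := by
    intro s t hs ht hst
    by_contra hne
    wlog hlt : s < t generalizing s t
    · exact this t s ht hs hst.symm (Ne.symm hne) (by omega)
    apply hminim (n - (t - s)) (by omega)
    have hgdef : ∀ k, (fun k => if k ≤ s then f k else f (k + (t - s))) k =
        if k ≤ s then f k else f (k + (t - s)) := fun k => rfl
    refine ⟨fun k => if k ≤ s then f k else f (k + (t - s)), ?_, ?_, ?_, ?_⟩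
    · rw [hgdef, if_pos (Nat.zero_le s)]; exact hf0
    · rw [hgdef]
      by_cases h : n - (t - s) ≤ s
      · rw [if_pos h]
        have e : n - (t - s) = s := by omega
        rw [e, hst, ← hfn]
        congr 1
        omega
      · rw [if_neg h, ← hfn]
        congr 1
        omega
    · intro k hk
      rw [hgdef]
      by_cases h : k ≤ s
      · rw [if_pos h]; exact hmem k (by omega)
      · rw [if_neg h]; exact hmem _ (by omega)
    · intro k hk
      rw [hgdef, hgdef]
      by_cases h1 : k + 1 ≤ s
      · rw [if_pos h1, if_pos (by omega : k ≤ s)]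
        exact hchain k (by omega)
      by_cases h2 : k ≤ s
      · have hks : k = s := by omega
        subst hks
        rw [if_pos le_rfl, if_neg h1, hst]
        have e : k + 1 + (t - k) = t + 1 := by omega
        rw [e]
        exact hchain t (by omega)
      · rw [if_neg h2, if_neg h1]
        have e : k + 1 + (t - s) = (k + (t - s)) + 1 := by omega
        rw [e]
        exact hchain _ (by omega)
  -- chordlessness
  have hchord : ∀ s t, t ≤ n → s + 1 < t → ⟪R.simple (f s), R.simple (f t)⟫ = 0 := by
    intro s t ht hst
    by_contra hne0
    apply hminim (n - (t - s - 1)) (by omega)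
    have hgdef : ∀ k, (fun k => if k ≤ s then f k else f (k + (t - s - 1))) k =
        if k ≤ s then f k else f (k + (t - s - 1)) := fun k => rfl
    refine ⟨fun k => if k ≤ s then f k else f (k + (t - s - 1)), ?_, ?_, ?_, ?_⟩
    · rw [hgdef, if_pos (Nat.zero_le s)]; exact hf0
    · rw [hgdef, if_neg (by omega), ← hfn]
      congr 1
      omega
    · intro k hk
      rw [hgdef]
      by_cases h : k ≤ s
      · rw [if_pos h]; exact hmem k (by omega)
      · rw [if_neg h]; exact hmem _ (by omega)
    · intro k hk
      rw [hgdef, hgdef]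
      by_cases h1 : k + 1 ≤ s
      · rw [if_pos h1, if_pos (by omega : k ≤ s)]
        exact hchain k (by omega)
      by_cases h2 : k ≤ s
      · have hks : k = s := by omega
        subst hks
        rw [if_pos le_rfl, if_neg h1]
        have e : k + 1 + (t - k - 1) = t := by omega
        rw [e]
        refine ⟨hmem t ht, ?_, hne0⟩
        intro h
        have := hinj k t (by omega) ht h
        omega
      · rw [if_neg h2, if_neg h1]
        have e : k + 1 + (t - s - 1) = (k + (t - s - 1)) + 1 := by omega
        rw [e]
        exact hchain _ (by omega)
  exact ⟨n, f, hn1, hf0, hfn, hmem, hinj,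
    fun k hk => (hchain k hk).2.2, hchord⟩

lemma wle_refl (R : RootSystemData ℓ E) (x : E) : R.wle x x :=
  ⟨fun _ => 0, by simp⟩

lemma cpair_zero_or_one (R : RootSystemData ℓ E) (x : E) (hx : R.IsDominant x)
    (i : Fin ℓ) (hle : cpair x (R.simple i) ≤ 1) :
    cpair x (R.simple i) = 0 ∨ cpair x (R.simple i) = 1 := by
  obtain ⟨z, hz⟩ := hx.1 _ (R.simple_mem i)
  have h0 := hx.2 i
  rw [hz] at h0 hle ⊢
  have hz0 : (0:ℤ) ≤ z := by exact_mod_cast h0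
  have hz1 : z ≤ 1 := by exact_mod_cast hle
  have : z = 0 ∨ z = 1 := by omega
  rcases this with h | h <;> rw [h] <;> simp

end RootSystemData

lemma sum_le_one_of_01 {ι : Type*} (I : Finset ι) (p : ι → ℝ)
    (h01 : ∀ i, p i = 0 ∨ p i = 1)
    (hpair : ∀ i ∈ I, ∀ j ∈ I, i ≠ j → ¬(p i = 1 ∧ p j = 1)) :
    ∑ i ∈ I, p i ≤ 1 := by
  classical
  rw [← Finset.sum_filter_add_sum_filter_not I (fun i => p i = 1) p]
  have e1 : ∑ i ∈ I.filter (fun i => p i = 1), p i =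
      ((I.filter (fun i => p i = 1)).card : ℝ) := by
    rw [Finset.sum_congr rfl (fun i hi => (Finset.mem_filter.mp hi).2)]
    simp
  have e2 : ∑ i ∈ I.filter (fun i => ¬ p i = 1), p i = 0 := by
    refine Finset.sum_eq_zero fun i hi => ?_
    rcases h01 i with h | h
    · exact h
    · exact absurd h (Finset.mem_filter.mp hi).2
  rw [e1, e2, add_zero]
  have hcard : (I.filter (fun i => p i = 1)).card ≤ 1 := by
    refine Finset.card_le_one.mpr fun a ha b hb => ?_
    by_contra hab
    obtain ⟨ha1, ha2⟩ := Finset.mem_filter.mp ha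
    obtain ⟨hb1, hb2⟩ := Finset.mem_filter.mp hb
    exact hpair a ha1 b hb1 hab ⟨ha2, hb2⟩
  exact_mod_cast hcard

/-- If `(λ,μ,ν)` is a low triple then `ht₀⁺(λ+μ-ν) ≤ 2`, where the positive part
of the height is taken over the maximal simply laced subdiagram `I₀` containing
node 1 (with the max-of-the-two-sums convention in type F₄); here the
fundamental-weight coefficients of `β` are `a_i = ⟨β, α_i∨⟩`. -/
theorem statement4 (hℓ : 0 < ℓ) (R : RootSystemData ℓ E)
    (lam mu nu : E) (hLT : R.LowTriple lam mu nu)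
    (I0 : Finset (Fin ℓ)) (h0 : (⟨0, hℓ⟩ : Fin ℓ) ∈ I0)
    (hSL : R.SimplyLaced I0) (hConn : R.Connected I0)
    (hmax : ∀ S : Finset (Fin ℓ), I0 ⊆ S → (⟨0, hℓ⟩ : Fin ℓ) ∈ S →
      R.SimplyLaced S → R.Connected S → S = I0) :
    (¬ R.IsF4 →
      ∑ i ∈ I0, max (cpair (lam + mu - nu) (R.simple i)) 0 ≤ 2) ∧
    (∀ e : Fin 4 ≃o Fin ℓ,
      (∀ a b : Fin 4, cpair (R.simple (e b)) (R.simple (e a)) = F4Cartan a b) →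
      max (max (cpair (lam + mu - nu) (R.simple (e 0))) 0 +
            max (cpair (lam + mu - nu) (R.simple (e 1))) 0)
          (max (cpair (lam + mu - nu) (R.simple (e 2))) 0 +
            max (cpair (lam + mu - nu) (R.simple (e 3))) 0) ≤ 2) := by

  classical
  obtain ⟨hlam, hmu, hnuD, hminty, hgap⟩ := hLT
  have hminL : ∀ x', R.IsDominant x' → R.wle x' lam → R.wle nu (x' + mu) → x' = lam :=
    fun x' h1 h2 h3 => (hminty x' mu h1 hmu h2 (R.wle_refl mu) h3).1
  have hgapM : R.wle (nu + ∑ i, R.simple i) (mu + lam) := by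
    rwa [add_comm mu lam]
  have hminM : ∀ x', R.IsDominant x' → R.wle x' mu → R.wle nu (x' + lam) → x' = mu :=
    fun x' h1 h2 h3 => (hminty lam x' hlam h1 (R.wle_refl lam) h2
      (by rwa [add_comm x' lam] at h3)).2
  have hL1 : ∀ i, cpair lam (R.simple i) ≤ 1 :=
    fun i => R.cpair_le_one lam mu nu hlam hminL hgap i
  have hM1 : ∀ i, cpair mu (R.simple i) ≤ 1 :=
    fun i => R.cpair_le_one mu lam nu hmu hminM hgapM i
  have h01L : ∀ i, cpair lam (R.simple i) = 0 ∨ cpair lam (R.simple i) = 1 :=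
    fun i => R.cpair_zero_or_one lam hlam i (hL1 i)
  have h01M : ∀ i, cpair mu (R.simple i) = 0 ∨ cpair mu (R.simple i) = 1 :=
    fun i => R.cpair_zero_or_one mu hmu i (hM1 i)
  have hmaxle : ∀ i, max (cpair (lam + mu - nu) (R.simple i)) 0 ≤
      cpair lam (R.simple i) + cpair mu (R.simple i) := by
    intro i
    have hsplit : cpair (lam + mu - nu) (R.simple i) =
        cpair lam (R.simple i) + cpair mu (R.simple i) - cpair nu (R.simple i) := by
      rw [cpair_sub_left, cpair_add_left]
    have h1 := hnuD.2 i
    have h2 := hlam.2 i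
    have h3 := hmu.2 i
    rw [hsplit]
    exact max_le (by linarith) (by linarith)
  have pairExl : ∀ (x y : E), R.IsDominant x →
      (∀ x', R.IsDominant x' → R.wle x' x → R.wle nu (x' + y) → x' = x) →
      R.wle (nu + ∑ i, R.simple i) (x + y) →
      ∀ i ∈ I0, ∀ j ∈ I0, i ≠ j →
      ¬(1 ≤ cpair x (R.simple i) ∧ 1 ≤ cpair x (R.simple j)) := by
    rintro x y hx hmin hgap' i hi j hj hij ⟨ha, hb⟩
    obtain ⟨n, f, hn1, hf0, hfn, hmemf, hinj, hadj, hchord⟩ :=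
      R.exists_path I0 hConn i j hi hj hij
    refine R.path_min x y nu hx hmin hgap' n hn1 f hinj ?_ hchord ?_ ?_
    · intro k hk
      have hne : f k ≠ f (k+1) := fun h => by
        have := hinj k (k+1) (by omega) (by omega) h
        omega
      have hmk := hmemf k (by omega)
      have hmk1 := hmemf (k+1) (by omega)
      constructor
      · rcases hSL (f k) hmk (f (k+1)) hmk1 hne with h | h
        · exact absurd (inner_eq_zero_of_cpair (R.simple_ne_zero _) h) (hadj k hk)
        · exact h
      · rcases hSL (f (k+1)) hmk1 (f k) hmk (Ne.symm hne) with h | h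
        · have h2 : ⟪R.simple (f k), R.simple (f (k+1))⟫ = 0 := by
            rw [real_inner_comm]
            exact inner_eq_zero_of_cpair (R.simple_ne_zero _) h
          exact absurd h2 (hadj k hk)
        · exact h
    · rw [hf0]; exact ha
    · rw [hfn]; exact hb
  have hpairL := pairExl lam mu hlam hminL hgap
  have hpairM := pairExl mu lam hmu hminM hgapM
  have sum2le1 : ∀ (p q : ℝ), (p = 0 ∨ p = 1) → (q = 0 ∨ q = 1) →
      ¬(1 ≤ p ∧ 1 ≤ q) → p + q ≤ 1 := by
    intro p q hp hq hpq
    rcases hp with rfl | rfl <;> rcases hq with rfl | rfl <;> norm_num at *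
  constructor
  · intro _
    have step1 : ∑ i ∈ I0, max (cpair (lam + mu - nu) (R.simple i)) 0 ≤
        ∑ i ∈ I0, (cpair lam (R.simple i) + cpair mu (R.simple i)) :=
      Finset.sum_le_sum fun i _ => hmaxle i
    rw [Finset.sum_add_distrib] at step1
    have sL : ∑ i ∈ I0, cpair lam (R.simple i) ≤ 1 :=
      sum_le_one_of_01 I0 _ h01L (fun i hi j hj hij ⟨h1, h2⟩ =>
        hpairL i hi j hj hij ⟨h1.ge, h2.ge⟩)
    have sM : ∑ i ∈ I0, cpair mu (R.simple i) ≤ 1 :=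
      sum_le_one_of_01 I0 _ h01M (fun i hi j hj hij ⟨h1, h2⟩ =>
        hpairM i hi j hj hij ⟨h1.ge, h2.ge⟩)
    linarith
  · intro e he
    have pair2 : ∀ (x y : E), R.IsDominant x →
        (∀ x', R.IsDominant x' → R.wle x' x → R.wle nu (x' + y) → x' = x) →
        R.wle (nu + ∑ i, R.simple i) (x + y) →
        ∀ i j : Fin ℓ, i ≠ j →
        cpair (R.simple i) (R.simple j) = -1 → cpair (R.simple j) (R.simple i) = -1 →
        ¬(1 ≤ cpair x (R.simple i) ∧ 1 ≤ cpair x (R.simple j)) := by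
      rintro x y hx hmin hgap' i j hij hc1 hc2 ⟨ha, hb⟩
      refine R.path_min x y nu hx hmin hgap' 1 le_rfl
        (fun k => if k = 0 then i else j) ?_ ?_ ?_ ?_ ?_
      · intro s t hs ht hst
        rcases (by omega : s = 0 ∨ s = 1) with rfl | rfl <;>
          rcases (by omega : t = 0 ∨ t = 1) with rfl | rfl
        · rfl
        · exact absurd (by simpa using hst) hij
        · exact absurd ((by simpa using hst : j = i)).symm hij
        · rfl
      · intro k hk
        have hk0 : k = 0 := by omega
        subst hk0
        simpa using ⟨hc1, hc2⟩
      · intro s t ht hst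
        omega
      · simpa using ha
      · simpa using hb
    have hne01 : e 0 ≠ e 1 := fun h => absurd (e.injective h) (by decide)
    have hne23 : e 2 ≠ e 3 := fun h => absurd (e.injective h) (by decide)
    have hc01 : cpair (R.simple (e 0)) (R.simple (e 1)) = -1 := by
      rw [he 1 0]; norm_num [F4Cartan]
    have hc10 : cpair (R.simple (e 1)) (R.simple (e 0)) = -1 := by
      rw [he 0 1]; norm_num [F4Cartan]
    have hc23 : cpair (R.simple (e 2)) (R.simple (e 3)) = -1 := by
      rw [he 3 2]; rfl
    have hc32 : cpair (R.simple (e 3)) (R.simple (e 2)) = -1 := by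
      rw [he 2 3]; rfl
    have pL01 := pair2 lam mu hlam hminL hgap (e 0) (e 1) hne01 hc01 hc10
    have pL23 := pair2 lam mu hlam hminL hgap (e 2) (e 3) hne23 hc23 hc32
    have pM01 := pair2 mu lam hmu hminM hgapM (e 0) (e 1) hne01 hc01 hc10
    have pM23 := pair2 mu lam hmu hminM hgapM (e 2) (e 3) hne23 hc23 hc32
    have sL01 := sum2le1 _ _ (h01L (e 0)) (h01L (e 1)) pL01
    have sL23 := sum2le1 _ _ (h01L (e 2)) (h01L (e 3)) pL23
    have sM01 := sum2le1 _ _ (h01M (e 0)) (h01M (e 1)) pM01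
    have sM23 := sum2le1 _ _ (h01M (e 2)) (h01M (e 3)) pM23
    refine max_le ?_ ?_
    · linarith [hmaxle (e 0), hmaxle (e 1)]
    · linarith [hmaxle (e 2), hmaxle (e 3)]
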